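/- Suppose $e, f \geq 1$ are integers and there exist sequences of positive integers $(x_n), (y_n)$ with $y_n \geq n$, $x_n = \Theta(y_n)$, and a sequence $z_n$ with $z_n/n \to 0$, such that for every $n$: $e^{y_n} \cdot y_n!$ divides $f^{x_n} \cdot x_n!$, which divides $e^{y_n + z_n} \cdot (y_n + z_n)!$. Then $e = f$. -/

import Mathlib

open Filter Nat Real

/-- Digit sum bound: sum of base-`p` digits is at most `p * (log₂ m + 1)`. -/
private lemma aux_digit_sum_le (p m : ℕ) (hp : 2 ≤ p) :
    (p.digits m).sum ≤ p * (Nat.log 2 m + 1) := by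
  rcases Nat.eq_zero_or_pos m with rfl | hm
  · simp
  have hlen : (p.digits m).length = Nat.log p m + 1 :=
    Nat.digits_len p m (by omega) (by omega)
  have hsum : (p.digits m).sum ≤ (p.digits m).length * p := by
    have := List.sum_le_card_nsmul (p.digits m) p
      (fun x hx => le_of_lt (Nat.digits_lt_base (by omega) hx))
    simpa [smul_eq_mul] using this
  have hlog : Nat.log p m ≤ Nat.log 2 m := Nat.log_anti_left (by norm_num) hp
  calc (p.digits m).sum ≤ (Nat.log p m + 1) * p := by rwa [hlen] at hsum
    _ ≤ (Nat.log 2 m + 1) * p := by gcongr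
    _ = p * (Nat.log 2 m + 1) := mul_comm _ _

/-- Valuation inequality extracted from a divisibility `e^a·a! ∣ f^b·b!`. -/
private lemma aux_val_ineq (p : ℕ) (hp : p.Prime) (e f a b : ℕ) (he : e ≠ 0) (hf : f ≠ 0)
    (h : e ^ a * a ! ∣ f ^ b * b !) :
    ((p - 1) * padicValNat p e + 1) * a ≤
      ((p - 1) * padicValNat p f + 1) * b + (p.digits a).sum := by
  haveI : Fact p.Prime := ⟨hp⟩
  have hub : f ^ b * b ! ≠ 0 := by positivity
  have hv : padicValNat p (e ^ a * a !) ≤ padicValNat p (f ^ b * b !) :=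
    (padicValNat_dvd_iff_le hub).mp (dvd_trans pow_padicValNat_dvd h)
  rw [padicValNat.mul (by positivity) (Nat.factorial_ne_zero a),
      padicValNat.mul (by positivity) (Nat.factorial_ne_zero b),
      padicValNat.pow e a, padicValNat.pow f b] at hv
  have hmul : (p - 1) * (a * padicValNat p e + padicValNat p (a !)) ≤
      (p - 1) * (b * padicValNat p f + padicValNat p (b !)) :=
    Nat.mul_le_mul_left _ hv
  rw [Nat.mul_add, Nat.mul_add, sub_one_mul_padicValNat_factorial a,
      sub_one_mul_padicValNat_factorial b] at hmul
  have hsa : (p.digits a).sum ≤ a := Nat.digit_sum_le p a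
  have hsb : (p.digits b).sum ≤ b := Nat.digit_sum_le p b
  have key : ∀ u w sa sb A B : ℕ, u + (A - sa) ≤ w + (B - sb) → sa ≤ A → sb ≤ B →
      u + A ≤ w + B + sa := by intros; omega
  have := key _ _ _ _ _ _ hmul hsa hsb
  calc ((p - 1) * padicValNat p e + 1) * a = (p - 1) * (a * padicValNat p e) + a := by ring
    _ ≤ (p - 1) * (b * padicValNat p f) + b + (p.digits a).sum := this
    _ = ((p - 1) * padicValNat p f + 1) * b + (p.digits a).sum := by ring

/-- `(logb 2 t)/t → 0` at infinity. -/
private lemma aux_logb_div : Tendsto (fun t : ℝ => Real.logb 2 t / t) atTop (nhds 0) := by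
  have h := Real.isLittleO_log_id_atTop.tendsto_div_nhds_zero
  have h2 : Tendsto (fun t : ℝ => Real.log t / t / Real.log 2) atTop (nhds (0 / Real.log 2)) :=
    h.div_const _
  rw [zero_div] at h2
  refine h2.congr (fun t => ?_)
  simp only [Real.logb, id]
  ring

/-- Analytic contradiction: `y n ≥ n` cannot be bounded by a sublinear quantity. -/
private lemma aux_contra (x y z : ℕ → ℕ) (hy : ∀ n, n ≤ y n) (hx : ∀ n, 0 < x n)
    (hz : Tendsto (fun n => (z n : ℝ) / n) atTop (nhds 0))
    (C : ℝ) (hC : 0 < C) (hxC : ∀ n, (x n : ℝ) ≤ C * y n)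
    (K : ℝ) (hK : ∀ n, (y n : ℝ) ≤
      K * ((z n : ℝ) + (Nat.log 2 (x n) : ℝ) + (Nat.log 2 (y n) : ℝ) + 1)) :
    False := by
  have hyR : Tendsto (fun n => (y n : ℝ)) atTop atTop :=
    tendsto_atTop_mono (fun n => by exact_mod_cast hy n) tendsto_natCast_atTop_atTop
  have hypos : ∀ᶠ n in atTop, (0 : ℝ) < y n := by
    filter_upwards [Filter.eventually_ge_atTop 1] with n hn
    have h1 : 0 < y n := by have := hy n; omega
    exact_mod_cast h1
  -- (Nat.log 2 (y n))/y n → 0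
  have hLbY : Tendsto (fun n => Real.logb 2 (y n) / (y n : ℝ)) atTop (nhds 0) :=
    (aux_logb_div).comp hyR
  have hLy : Tendsto (fun n => (Nat.log 2 (y n) : ℝ) / y n) atTop (nhds 0) := by
    refine squeeze_zero' ?_ ?_ hLbY
    · filter_upwards [hypos] with n hn
      positivity
    · filter_upwards [hypos] with n hn
      exact div_le_div_of_nonneg_right (Real.natLog_le_logb (y n) 2) hn.le
  -- (Nat.log 2 (x n))/y n → 0
  have hLx : Tendsto (fun n => (Nat.log 2 (x n) : ℝ) / y n) atTop (nhds 0) := by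
    have hup : Tendsto (fun n => Real.logb 2 C / (y n : ℝ) + Real.logb 2 (y n) / y n)
        atTop (nhds 0) := by
      have h1 : Tendsto (fun n => Real.logb 2 C / (y n : ℝ)) atTop (nhds 0) :=
        Tendsto.div_atTop tendsto_const_nhds hyR
      simpa using h1.add hLbY
    refine squeeze_zero' ?_ ?_ hup
    · filter_upwards [hypos] with n hn
      positivity
    · filter_upwards [hypos] with n hn
      have hxpos : (0 : ℝ) < x n := by exact_mod_cast hx n
      have hb1 : (Nat.log 2 (x n) : ℝ) ≤ Real.logb 2 (x n) := Real.natLog_le_logb _ 2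
      have hb2 : Real.logb 2 (x n) ≤ Real.logb 2 (C * y n) :=
        Real.logb_le_logb_of_le (by norm_num) hxpos (hxC n)
      have hb3 : Real.logb 2 (C * y n) = Real.logb 2 C + Real.logb 2 (y n) :=
        Real.logb_mul (ne_of_gt hC) (ne_of_gt hn)
      have : (Nat.log 2 (x n) : ℝ) ≤ Real.logb 2 C + Real.logb 2 (y n) := by
        rw [← hb3]; exact hb1.trans hb2
      rw [← add_div]
      exact div_le_div_of_nonneg_right this hn.le
  -- (z n)/y n → 0
  have hzy : Tendsto (fun n => (z n : ℝ) / y n) atTop (nhds 0) := by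
    refine squeeze_zero' ?_ ?_ hz
    · filter_upwards [hypos] with n hn
      positivity
    · filter_upwards [Filter.eventually_ge_atTop 1] with n hn
      have h0 : (0 : ℝ) < n := by exact_mod_cast hn
      have h1 : (n : ℝ) ≤ y n := by exact_mod_cast hy n
      exact div_le_div_of_nonneg_left (by positivity) h0 h1
  -- 1/(y n) → 0
  have hinv : Tendsto (fun n => (1 : ℝ) / y n) atTop (nhds 0) :=
    Tendsto.div_atTop tendsto_const_nhds hyR
  -- total
  have htot : Tendsto (fun n => K * ((z n : ℝ) / y n + (Nat.log 2 (x n) : ℝ) / y n +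
      (Nat.log 2 (y n) : ℝ) / y n + (1 : ℝ) / y n)) atTop (nhds 0) := by
    have := (((hzy.add hLx).add hLy).add hinv).const_mul K
    simpa using this
  have hlow : ∀ᶠ n in atTop, (1 : ℝ) ≤ K * ((z n : ℝ) / y n + (Nat.log 2 (x n) : ℝ) / y n +
      (Nat.log 2 (y n) : ℝ) / y n + (1 : ℝ) / y n) := by
    filter_upwards [hypos] with n hn
    rw [← add_div, ← add_div, ← add_div, ← mul_div_assoc,
      le_div_iff₀ hn, one_mul]
    exact hK n
  have := ge_of_tendsto htot hlow
  linarith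

theorem lampdesigner_arithmetic (e f : ℕ) (he : 1 ≤ e) (hf : 1 ≤ f)
    (x y z : ℕ → ℕ)
    (hx : ∀ n, 0 < x n) (hy0 : ∀ n, 0 < y n) (hy : ∀ n, n ≤ y n)
    (hz : Filter.Tendsto (fun n => (z n : ℝ) / n) Filter.atTop (nhds 0))
    (hdiv1 : ∀ n, e ^ y n * Nat.factorial (y n) ∣ f ^ x n * Nat.factorial (x n))
    (hdiv2 : ∀ n, f ^ x n * Nat.factorial (x n) ∣
      e ^ (y n + z n) * Nat.factorial (y n + z n))
    (c C : ℝ) (hc : 0 < c) (hC : 0 < C)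
    (hΘ : ∀ n, c * y n ≤ (x n : ℝ) ∧ (x n : ℝ) ≤ C * y n) :
    e = f := by
  have he0 : e ≠ 0 := by omega
  have hf0 : f ≠ 0 := by omega
  -- a large auxiliary prime q > max e f
  obtain ⟨q, hqge, hq⟩ := Nat.exists_infinite_primes (max e f + 1)
  have hq2 : 2 ≤ q := hq.two_le
  have hqe : padicValNat q e = 0 :=
    padicValNat.eq_zero_of_not_dvd (fun hdvd => by
      have := Nat.le_of_dvd (by omega) hdvd
      have := le_max_left e f; omega)
  have hqf : padicValNat q f = 0 :=
    padicValNat.eq_zero_of_not_dvd (fun hdvd => by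
      have := Nat.le_of_dvd (by omega) hdvd
      have := le_max_right e f; omega)
  -- step 1: |x - y| control via the big prime
  have hxy : ∀ n, x n ≤ y n + z n + (q.digits (x n)).sum := by
    intro n
    have h := aux_val_ineq q hq f e (x n) (y n + z n) hf0 he0 (hdiv2 n)
    rw [hqe, hqf] at h
    simpa using h
  have hyx : ∀ n, y n ≤ x n + (q.digits (y n)).sum := by
    intro n
    have h := aux_val_ineq q hq e f (y n) (x n) he0 hf0 (hdiv1 n)
    rw [hqe, hqf] at h
    simpa using h
  -- cancellation helper
  have cancel : ∀ A B u v : ℕ, A + 1 ≤ B → B * u ≤ A * u + v → u ≤ v := by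
    intro A B u v h1 h2
    have h3 : (A + 1) * u ≤ B * u := Nat.mul_le_mul_right u h1
    have h4 : A * u + u ≤ A * u + v := by
      calc A * u + u = (A + 1) * u := by ring
        _ ≤ B * u := h3
        _ ≤ A * u + v := h2
    exact le_of_add_le_add_left h4
  -- combination helper
  have step : ∀ (A P Q zz Lx Ly sq sp : ℕ), sq ≤ Q * (Ly + 1) → sp ≤ P * (Lx + 1) →
      A * (sq + zz) + sp ≤ (A * Q + A + P) * (zz + Lx + Ly + 1) := by
    intro A P Q zz Lx Ly sq sp h1 h2
    have hAM : A ≤ A * Q + A + P :=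
      le_trans (Nat.le_add_left A (A * Q)) (Nat.le_add_right _ P)
    have hPM : P ≤ A * Q + A + P := Nat.le_add_left P (A * Q + A)
    have hQM : A * Q ≤ A * Q + A + P :=
      le_trans (Nat.le_add_right (A * Q) A) (Nat.le_add_right _ P)
    have e1 : A * zz ≤ (A * Q + A + P) * zz := Nat.mul_le_mul_right zz hAM
    have e2 : P * Lx ≤ (A * Q + A + P) * Lx := Nat.mul_le_mul_right Lx hPM
    have e3 : A * Q * Ly ≤ (A * Q + A + P) * Ly := Nat.mul_le_mul_right Ly hQM
    have e4 : A * Q + P ≤ A * Q + A + P :=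
      Nat.add_le_add_right (Nat.le_add_right (A * Q) A) P
    calc A * (sq + zz) + sp ≤ A * (Q * (Ly + 1) + zz) + P * (Lx + 1) := by gcongr
      _ = A * Q * Ly + A * Q + A * zz + (P * Lx + P) := by ring
      _ ≤ (A * Q + A + P) * zz + (A * Q + A + P) * Lx + (A * Q + A + P) * Ly +
          (A * Q + A + P) := by linarith
      _ = (A * Q + A + P) * (zz + Lx + Ly + 1) := by ring
  -- main claim: all valuations agree
  have hvals : ∀ p : ℕ, p.Prime → padicValNat p e = padicValNat p f := by
    intro p hp
    by_contra hne
    have hp2 : 2 ≤ p := hp.two_le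
    set a := padicValNat p e with ha
    set b := padicValNat p f with hb
    set A := (p - 1) * a + 1 with hA
    set B := (p - 1) * b + 1 with hB
    rcases Nat.lt_or_ge a b with hab | hab
    · -- a < b : B ≥ A + 1, bound x n
      have hAB : A + 1 ≤ B := by
        have : a + 1 ≤ b := hab
        have h1 : (p - 1) * (a + 1) ≤ (p - 1) * b := Nat.mul_le_mul_left _ this
        have hp1 : 1 ≤ p - 1 := by omega
        calc A + 1 = (p - 1) * a + 2 := by omega
          _ ≤ (p - 1) * a + (p - 1) + 1 := by omega
          _ = (p - 1) * (a + 1) + 1 := by ring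
          _ ≤ (p - 1) * b + 1 := by omega
      have hbound : ∀ n, x n ≤ A * ((q.digits (y n)).sum + z n) + (p.digits (x n)).sum := by
        intro n
        refine cancel A B (x n) _ hAB ?_
        calc B * x n ≤ A * (y n + z n) + (p.digits (x n)).sum :=
              aux_val_ineq p hp f e (x n) (y n + z n) hf0 he0 (hdiv2 n)
          _ ≤ A * (x n + (q.digits (y n)).sum + z n) + (p.digits (x n)).sum := by
              gcongr
              have := hyx n; omega
          _ = A * x n + (A * ((q.digits (y n)).sum + z n) + (p.digits (x n)).sum) := by ring
      -- turn into real bound on y and contradict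
      set M := A * q + A + p with hM
      have hnat : ∀ n, x n ≤ M * (z n + Nat.log 2 (x n) + Nat.log 2 (y n) + 1) := by
        intro n
        calc x n ≤ A * ((q.digits (y n)).sum + z n) + (p.digits (x n)).sum := hbound n
          _ ≤ (A * q + A + p) * (z n + Nat.log 2 (x n) + Nat.log 2 (y n) + 1) :=
            step A p q (z n) (Nat.log 2 (x n)) (Nat.log 2 (y n)) _ _
              (aux_digit_sum_le q (y n) hq2) (aux_digit_sum_le p (x n) hp2)
      refine aux_contra x y z hy hx hz C hC (fun n => (hΘ n).2) (M / c) (fun n => ?_)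
      have h1 : c * (y n : ℝ) ≤ (x n : ℝ) := (hΘ n).1
      have h2 : (x n : ℝ) ≤ (M : ℝ) * ((z n : ℝ) + (Nat.log 2 (x n) : ℝ) +
          (Nat.log 2 (y n) : ℝ) + 1) := by exact_mod_cast hnat n
      have h3 : c * (y n : ℝ) ≤ (M : ℝ) * ((z n : ℝ) + (Nat.log 2 (x n) : ℝ) +
          (Nat.log 2 (y n) : ℝ) + 1) := h1.trans h2
      calc (y n : ℝ) = c * y n / c := by field_simp
        _ ≤ (M : ℝ) * ((z n : ℝ) + (Nat.log 2 (x n) : ℝ) + (Nat.log 2 (y n) : ℝ) + 1) / c := by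
            gcongr
        _ = (M : ℝ) / c * ((z n : ℝ) + (Nat.log 2 (x n) : ℝ) + (Nat.log 2 (y n) : ℝ) + 1) := by
            ring
    · -- b < a : A ≥ B + 1, bound y n directly
      have hba : b < a := lt_of_le_of_ne hab (fun h => hne (by omega))
      have hBA : B + 1 ≤ A := by
        have : b + 1 ≤ a := hba
        have h1 : (p - 1) * (b + 1) ≤ (p - 1) * a := Nat.mul_le_mul_left _ this
        have hp1 : 1 ≤ p - 1 := by omega
        calc B + 1 = (p - 1) * b + 2 := by omega
          _ ≤ (p - 1) * b + (p - 1) + 1 := by omega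
          _ = (p - 1) * (b + 1) + 1 := by ring
          _ ≤ (p - 1) * a + 1 := by omega
      have hbound : ∀ n, y n ≤ B * ((q.digits (x n)).sum + z n) + (p.digits (y n)).sum := by
        intro n
        refine cancel B A (y n) _ hBA ?_
        calc A * y n ≤ B * x n + (p.digits (y n)).sum :=
              aux_val_ineq p hp e f (y n) (x n) he0 hf0 (hdiv1 n)
          _ ≤ B * (y n + (q.digits (x n)).sum + z n) + (p.digits (y n)).sum := by
              gcongr
              have := hxy n; omega
          _ = B * y n + (B * ((q.digits (x n)).sum + z n) + (p.digits (y n)).sum) := by ring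
      set M := B * q + B + p with hM
      have hnat : ∀ n, y n ≤ M * (z n + Nat.log 2 (y n) + Nat.log 2 (x n) + 1) := by
        intro n
        calc y n ≤ B * ((q.digits (x n)).sum + z n) + (p.digits (y n)).sum := hbound n
          _ ≤ (B * q + B + p) * (z n + Nat.log 2 (y n) + Nat.log 2 (x n) + 1) :=
            step B p q (z n) (Nat.log 2 (y n)) (Nat.log 2 (x n)) _ _
              (aux_digit_sum_le q (x n) hq2) (aux_digit_sum_le p (y n) hp2)
      refine aux_contra x y z hy hx hz C hC (fun n => (hΘ n).2) (M : ℝ) (fun n => ?_)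
      have h2 : (y n : ℝ) ≤ (M : ℝ) * ((z n : ℝ) + (Nat.log 2 (y n) : ℝ) +
          (Nat.log 2 (x n) : ℝ) + 1) := by exact_mod_cast hnat n
      calc (y n : ℝ) ≤ (M : ℝ) * ((z n : ℝ) + (Nat.log 2 (y n) : ℝ) +
          (Nat.log 2 (x n) : ℝ) + 1) := h2
        _ = (M : ℝ) * ((z n : ℝ) + (Nat.log 2 (x n) : ℝ) + (Nat.log 2 (y n) : ℝ) + 1) := by
            ring
  exact (Nat.eq_iff_prime_padicValNat_eq e f he0 hf0).mpr hvals
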